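/- Let α be a nonempty finite type and p : α → ℝ a probability vector. Let K ≥ 1 be a natural number and X : α → ℝ with 0 ≤ X a ≤ 1/K for all a. Define F a = 1 − (1 − X a)^K. Then Var_p[F] ≥ (K/e)² · Var_p[X], where e = exp 1. -/

import Mathlib

lemma aux_exp_bound (K : ℕ) (hK : 1 ≤ K) :
    (Real.exp 1)⁻¹ ≤ (1 - 1/(K:ℝ)) ^ (K - 1) := by
  rcases Nat.eq_or_lt_of_le hK with h | h
  · simp [← h]
    have h1 := Real.one_le_exp (le_of_lt one_pos)
    exact inv_le_one_of_one_le₀ h1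
  · have hn1 : 1 ≤ K - 1 := by omega
    set n := K - 1 with hn'
    have hKn : (K : ℝ) = (n : ℝ) + 1 := by
      have : K = n + 1 := by omega
      rw [this]; push_cast; ring
    have hnpos : (0:ℝ) < n := by exact_mod_cast hn1
    have h1 : (1 + 1/(n:ℝ)) ^ n ≤ Real.exp 1 := by
      have := Real.add_one_le_exp (1/(n:ℝ))
      calc (1 + 1/(n:ℝ)) ^ n ≤ (Real.exp (1/(n:ℝ))) ^ n := by
            apply pow_le_pow_left₀ (by positivity) (by linarith)
        _ = Real.exp 1 := by
            rw [← Real.exp_nat_mul]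
            congr 1
            field_simp
    have heq : (1 - 1/(K:ℝ)) = (1 + 1/(n:ℝ))⁻¹ := by
      rw [hKn]; field_simp; ring
    rw [heq, inv_pow]
    apply inv_anti₀ (by positivity) h1

lemma key_pt (K : ℕ) (hK : 1 ≤ K) (x y : ℝ) (hx0 : 0 ≤ x) (hy1 : y ≤ 1/(K:ℝ))
    (hxy : x ≤ y) :
    ((K:ℝ) / Real.exp 1) * (y - x) ≤ (1 - x) ^ K - (1 - y) ^ K := by
  have hKpos : (0:ℝ) < K := by exact_mod_cast hK
  have hm : (0:ℝ) ≤ 1 - 1/(K:ℝ) := by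
    rw [sub_nonneg]
    rw [div_le_one hKpos]; exact_mod_cast hK
  have hyb : 1 - 1/(K:ℝ) ≤ 1 - y := by linarith
  have hxb : 1 - y ≤ 1 - x := by linarith
  have hgeo := geom_sum₂_mul (1 - x) (1 - y) K
  have hsum : (K:ℝ) * (1 - 1/(K:ℝ)) ^ (K - 1)
      ≤ ∑ i ∈ Finset.range K, (1 - x) ^ i * (1 - y) ^ (K - 1 - i) := by
    calc (K:ℝ) * (1 - 1/(K:ℝ)) ^ (K - 1)
        = ∑ i ∈ Finset.range K, (1 - 1/(K:ℝ)) ^ (K - 1) := by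
          rw [Finset.sum_const, Finset.card_range, nsmul_eq_mul]
      _ ≤ _ := by
          apply Finset.sum_le_sum
          intro i hi
          have hi' : i + (K - 1 - i) = K - 1 := by
            simp at hi; omega
          calc (1 - 1/(K:ℝ)) ^ (K-1) = (1 - 1/(K:ℝ)) ^ i * (1 - 1/(K:ℝ)) ^ (K-1-i) := by
                rw [← pow_add, hi']
            _ ≤ (1 - x) ^ i * (1 - y) ^ (K - 1 - i) := by
                apply mul_le_mul
                · exact pow_le_pow_left₀ hm (by linarith) i
                · exact pow_le_pow_left₀ hm hyb _
                · exact pow_nonneg hm _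
                · exact pow_nonneg (by linarith) i
  rw [← hgeo]
  have hc : (K:ℝ) / Real.exp 1 ≤ (K:ℝ) * (1 - 1/(K:ℝ)) ^ (K - 1) := by
    rw [div_eq_mul_inv]
    exact mul_le_mul_of_nonneg_left (aux_exp_bound K hK) (le_of_lt hKpos)
  have hyx : 0 ≤ y - x := by linarith
  calc (K:ℝ) / Real.exp 1 * (y - x)
      ≤ ((K:ℝ) * (1 - 1/(K:ℝ)) ^ (K - 1)) * (y - x) :=
        mul_le_mul_of_nonneg_right hc hyx
    _ ≤ (∑ i ∈ Finset.range K, (1 - x) ^ i * (1 - y) ^ (K - 1 - i)) * (y - x) :=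
        mul_le_mul_of_nonneg_right hsum hyx
    _ = (∑ i ∈ Finset.range K, (1 - x) ^ i * (1 - y) ^ (K - 1 - i)) * ((1-x) - (1-y)) := by
        ring

lemma key_sq (K : ℕ) (hK : 1 ≤ K) (x y : ℝ) (hx0 : 0 ≤ x) (hx1 : x ≤ 1/(K:ℝ))
    (hy0 : 0 ≤ y) (hy1 : y ≤ 1/(K:ℝ)) :
    ((K:ℝ) / Real.exp 1) ^ 2 * (x - y) ^ 2
      ≤ ((1 - (1-x)^K) - (1 - (1-y)^K)) ^ 2 := by
  have hc : 0 ≤ (K:ℝ) / Real.exp 1 := by positivity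
  rcases le_total x y with h | h
  · have := key_pt K hK x y hx0 hy1 h
    have h2 : ((K:ℝ)/Real.exp 1 * (y - x))^2 ≤ ((1-x)^K - (1-y)^K)^2 := by
      apply sq_le_sq' <;> nlinarith [mul_nonneg hc (sub_nonneg.mpr h)]
    calc ((K:ℝ)/Real.exp 1)^2 * (x-y)^2 = ((K:ℝ)/Real.exp 1 * (y-x))^2 := by ring
      _ ≤ ((1-x)^K - (1-y)^K)^2 := h2
      _ = _ := by ring
  · have := key_pt K hK y x hy0 hx1 h
    have h2 : ((K:ℝ)/Real.exp 1 * (x - y))^2 ≤ ((1-y)^K - (1-x)^K)^2 := by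
      apply sq_le_sq' <;> nlinarith [mul_nonneg hc (sub_nonneg.mpr h)]
    calc ((K:ℝ)/Real.exp 1)^2 * (x-y)^2 = ((K:ℝ)/Real.exp 1 * (x-y))^2 := by ring
      _ ≤ ((1-y)^K - (1-x)^K)^2 := h2
      _ = _ := by ring

lemma var_double {α : Type*} [Fintype α] (p : α → ℝ) (hp1 : ∑ a, p a = 1)
    (f : α → ℝ) :
    ∑ a, p a * (f a - ∑ b, p b * f b) ^ 2
      = (1/2) * ∑ a, ∑ b, p a * p b * (f a - f b) ^ 2 := by
  have e1 : ∀ a b : α, p a * p b * (f a - f b)^2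
      = p a * p b * (f a)^2 - 2 * ((p a * f a) * (p b * f b)) + p a * p b * (f b)^2 := by
    intro a b; ring
  simp only [e1, Finset.sum_add_distrib, Finset.sum_sub_distrib,
    ← Finset.mul_sum, ← Finset.sum_mul]
  have e2 : ∀ a : α, p a * (f a - ∑ b, p b * f b)^2
      = p a * (f a)^2 - 2 * ((p a * f a) * (∑ b, p b * f b))
        + p a * (∑ b, p b * f b)^2 := by
    intro a; ring
  simp only [e2, Finset.sum_add_distrib, Finset.sum_sub_distrib,
    ← Finset.sum_mul, ← Finset.mul_sum]
  rw [hp1]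
  have e3 : (∑ x : α, ∑ y : α, p x * p y * f y ^ 2) = ∑ y : α, p y * f y ^ 2 := by
    simp only [mul_assoc, ← Finset.mul_sum]
    rw [← Finset.sum_mul, hp1, one_mul]
  rw [e3]
  ring


/-- For a probability vector `p`, `K ≥ 1`, and `X : α → ℝ` with
`0 ≤ X a ≤ 1/K`, setting `F a = 1 − (1 − X a)^K` we have
`Var_p[F] ≥ (K/e)² · Var_p[X]`. -/
theorem bestOfK_variance_expansion {α : Type*} [Fintype α] [Nonempty α]
    (p : α → ℝ) (hp : ∀ a, 0 ≤ p a) (hp1 : ∑ a, p a = 1)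
    (K : ℕ) (hK : 1 ≤ K) (X : α → ℝ)
    (hX0 : ∀ a, 0 ≤ X a) (hX1 : ∀ a, X a ≤ 1 / (K : ℝ))
    (F : α → ℝ) (hF : ∀ a, F a = 1 - (1 - X a) ^ K) :
    ((K : ℝ) / Real.exp 1) ^ 2 * (∑ a, p a * (X a - ∑ b, p b * X b) ^ 2)
      ≤ ∑ a, p a * (F a - ∑ b, p b * F b) ^ 2 := by
  rw [var_double p hp1 X, var_double p hp1 F]
  rw [← mul_assoc, mul_comm (((K:ℝ)/Real.exp 1)^2) (1/2), mul_assoc]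
  apply mul_le_mul_of_nonneg_left _ (by norm_num : (0:ℝ) ≤ 1/2)
  rw [Finset.mul_sum]
  apply Finset.sum_le_sum
  intro a _
  rw [Finset.mul_sum]
  apply Finset.sum_le_sum
  intro b _
  rw [hF a, hF b]
  calc ((K:ℝ)/Real.exp 1)^2 * (p a * p b * (X a - X b)^2)
      = p a * p b * (((K:ℝ)/Real.exp 1)^2 * (X a - X b)^2) := by ring
    _ ≤ p a * p b * ((1 - (1 - X a)^K) - (1 - (1 - X b)^K))^2 := by
        apply mul_le_mul_of_nonneg_left
          (key_sq K hK (X a) (X b) (hX0 a) (hX1 a) (hX0 b) (hX1 b))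
          (mul_nonneg (hp a) (hp b))
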